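/- Let n ≥ 3 be odd and let R = ⊕_{x ∈ D_n} R_x be a finite-dimensional D_n-graded k-algebra with dim R = n+1, dim R_1 = 1 spanned by the identity, such that the support of the grading is {1} together with all n reflections and each nonidentity graded component is one-dimensional. Then R is not a semisimple algebra. -/

import Mathlib

/-- Let `n ≥ 3` be odd and let `R = ⊕_{x ∈ D_n} R_x` be a finite-dimensional
`D_n`-graded algebra over a field `k` with `dim R = n + 1`, with `R_1 = k·1`,
whose support consists of `1` together with all `n` reflections (i.e. the
components at nontrivial rotations vanish), each reflection component being
one-dimensional. Then `R` is not a semisimple ring. -/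
theorem dihedral_graded_algebra_not_semisimple
    {k : Type*} [Field k] {R : Type*} [Ring R] [Algebra k R] [FiniteDimensional k R]
    (n : ℕ) (hn : 3 ≤ n) (hodd : Odd n)
    (ℬ : DihedralGroup n → Submodule k R) [DirectSum.Decomposition ℬ]
    (hone : (1 : R) ∈ ℬ 1)
    (hmul : ∀ g h : DihedralGroup n, ∀ x ∈ ℬ g, ∀ y ∈ ℬ h, x * y ∈ ℬ (g * h))
    (hdim : Module.finrank k R = n + 1)
    (hB1 : ℬ 1 = Submodule.span k {(1 : R)})
    (hrot : ∀ i : ZMod n, i ≠ 0 → ℬ (DihedralGroup.r i) = ⊥)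
    (hrefl : ∀ i : ZMod n, Module.finrank k (ℬ (DihedralGroup.sr i)) = 1) :
    ¬ IsSemisimpleRing R := by
  intro hss
  haveI : Fact (1 < n) := ⟨by omega⟩
  -- pick a nonzero element of the component at `sr 0`
  have hpos : 0 < Module.finrank k (ℬ (DihedralGroup.sr 0)) := by rw [hrefl]; norm_num
  haveI := Module.finrank_pos_iff.mp hpos
  obtain ⟨v0, hv0⟩ := exists_ne (0 : ℬ (DihedralGroup.sr 0))
  set v : R := (v0 : R) with hv_def
  have hvmem : v ∈ ℬ (DihedralGroup.sr 0) := v0.2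
  have hv : v ≠ 0 := by
    simpa [hv_def, Submodule.coe_eq_zero] using hv0
  -- pick a nonzero element of the component at `sr 1`
  have hpos1 : 0 < Module.finrank k (ℬ (DihedralGroup.sr 1)) := by rw [hrefl]; norm_num
  haveI := Module.finrank_pos_iff.mp hpos1
  obtain ⟨w0, hw0⟩ := exists_ne (0 : ℬ (DihedralGroup.sr 1))
  set w : R := (w0 : R) with hw_def
  have hwmem : w ∈ ℬ (DihedralGroup.sr 1) := w0.2
  have hw : w ≠ 0 := by
    simpa [hw_def, Submodule.coe_eq_zero] using hw0
  -- `v * v = 0`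
  have hvv : v * v = 0 := by
    have h1 : v * v ∈ ℬ 1 := by
      have := hmul _ _ v hvmem v hvmem
      rwa [DihedralGroup.sr_mul_sr, sub_self, ← DihedralGroup.one_def] at this
    rw [hB1, Submodule.mem_span_singleton] at h1
    obtain ⟨c, hc⟩ := h1
    have hwv : w * v = 0 := by
      have := hmul _ _ w hwmem v hvmem
      rw [DihedralGroup.sr_mul_sr] at this
      have hne : (0 : ZMod n) - 1 ≠ 0 := by
        simp only [zero_sub, ne_eq, neg_eq_zero]
        exact one_ne_zero
      rw [hrot _ hne] at this
      simpa using this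
    have : c • w = 0 := by
      calc c • w = w * (c • (1 : R)) := by
            rw [mul_smul_comm, mul_one]
        _ = w * (v * v) := by rw [hc]
        _ = (w * v) * v := by rw [mul_assoc]
        _ = 0 := by rw [hwv, zero_mul]
    rcases smul_eq_zero.mp this with hc0 | hw0'
    · rw [← hc, hc0, zero_smul]
    · exact absurd hw0' hw
  -- every element of `ℬ (sr 0)` is a multiple of `v`
  have hone_dim : ∀ x ∈ ℬ (DihedralGroup.sr 0), ∃ c : k, c • v = x := by
    have hv0' : v0 ≠ 0 := hv0
    have := (finrank_eq_one_iff_of_nonzero' v0 hv0').mp (hrefl 0)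
    intro x hx
    obtain ⟨c, hc⟩ := this ⟨x, hx⟩
    exact ⟨c, by simpa [hv_def] using congrArg (Subtype.val) hc⟩
  -- key claim: `v * x * v = 0` for all `x`
  have key : ∀ x : R, v * x * v = 0 := by
    have htop : (⨆ g, ℬ g) = ⊤ :=
      (DirectSum.Decomposition.isInternal ℬ).submodule_iSup_eq_top
    intro x
    have hx : x ∈ (⨆ g, ℬ g) := htop ▸ Submodule.mem_top
    refine Submodule.iSup_induction (motive := fun y => v * y * v = 0) ℬ hx ?_ ?_ ?_
    · intro g y hy
      cases g with
      | r i =>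
        by_cases hi : i = 0
        · subst hi
          rw [← DihedralGroup.one_def, hB1, Submodule.mem_span_singleton] at hy
          obtain ⟨c, hc⟩ := hy
          rw [← hc, mul_smul_comm, mul_one, smul_mul_assoc, hvv, smul_zero]
        · rw [hrot _ hi] at hy
          simp only [Submodule.mem_bot] at hy
          rw [hy, mul_zero, zero_mul]
      | sr i =>
        by_cases hi : i = 0
        · subst hi
          obtain ⟨c, hc⟩ := hone_dim y hy
          rw [← hc, mul_smul_comm, smul_mul_assoc, mul_assoc, hvv, mul_zero, smul_zero]
        · have hvy : v * y ∈ ℬ (DihedralGroup.r i) := by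
            have := hmul _ _ v hvmem y hy
            rwa [DihedralGroup.sr_mul_sr, sub_zero] at this
          rw [hrot _ hi] at hvy
          simp only [Submodule.mem_bot] at hvy
          rw [hvy, zero_mul]
    · show v * 0 * v = 0; rw [mul_zero, zero_mul]
    · intro y z hy hz
      show v * (y + z) * v = 0; rw [mul_add, add_mul, hy, hz, add_zero]
  -- the left ideal generated by `v`
  set I : Submodule R R := Submodule.span R {v} with hI_def
  obtain ⟨J, hJ⟩ := exists_isCompl I
  have h1top : (1 : R) ∈ I ⊔ J := by rw [hJ.sup_eq_top]; exact Submodule.mem_top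
  obtain ⟨e, he, f, hf, hef⟩ := Submodule.mem_sup.mp h1top
  obtain ⟨r, hr⟩ := Submodule.mem_span_singleton.mp he
  have hve : v * e = 0 := by
    rw [← hr, smul_eq_mul, ← mul_assoc]
    exact key r
  have hveq : v = v * f := by
    calc v = v * (e + f) := by rw [hef, mul_one]
      _ = v * e + v * f := by rw [mul_add]
      _ = v * f := by rw [hve, zero_add]
  have hvJ : v ∈ J := by
    rw [hveq]
    exact J.smul_mem v hf
  have hvI : v ∈ I := Submodule.mem_span_singleton_self v
  have : v ∈ I ⊓ J := ⟨hvI, hvJ⟩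
  rw [hJ.inf_eq_bot] at this
  exact hv (by simpa using this)
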